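/- Let Ω ⊆ ℝ³ be open, η > 0, and let (u, p) and (u′, p′) be two pairs with u, u′ : Ω → ℝ³ twice continuously differentiable and p, p′ : Ω → ℝ continuously differentiable, each satisfying the Stokes system −ηΔu + ∇p = 0, div u = 0 (respectively with primes). Define the stress tensors σ_ij = −p δ_ij + η(∂_j u_i + ∂_i u_j) and σ′_ij = −p′ δ_ij + η(∂_j u′_i + ∂_i u′_j). Then at every point of Ω the Lorentz reciprocity identity Σ_{i=1}^{3} Σ_{j=1}^{3} ∂_j ( u′_i σ_ij − u_i σ′_ij ) = 0 holds. -/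

import Mathlib

/-- Partial derivative ∂_j f(x) of a scalar field on ℝ³ (Euclidean). -/
noncomputable def pd (f : EuclideanSpace ℝ (Fin 3) → ℝ) (j : Fin 3)
    (x : EuclideanSpace ℝ (Fin 3)) : ℝ :=
  fderiv ℝ f x (EuclideanSpace.single j 1)

namespace LorentzAux

abbrev E3 := EuclideanSpace ℝ (Fin 3)

lemma pd_add {f g : E3 → ℝ} {x : E3} (hf : DifferentiableAt ℝ f x)
    (hg : DifferentiableAt ℝ g x) (j : Fin 3) :
    pd (fun z => f z + g z) j x = pd f j x + pd g j x := by
  simp [pd, fderiv_fun_add hf hg]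

lemma pd_sub {f g : E3 → ℝ} {x : E3} (hf : DifferentiableAt ℝ f x)
    (hg : DifferentiableAt ℝ g x) (j : Fin 3) :
    pd (fun z => f z - g z) j x = pd f j x - pd g j x := by
  simp [pd, fderiv_fun_sub hf hg]

lemma pd_mul {f g : E3 → ℝ} {x : E3} (hf : DifferentiableAt ℝ f x)
    (hg : DifferentiableAt ℝ g x) (j : Fin 3) :
    pd (fun z => f z * g z) j x = pd f j x * g x + f x * pd g j x := by
  simp [pd, fderiv_fun_mul hf hg]; ring

lemma pd_const_mul {g : E3 → ℝ} {x : E3} (hg : DifferentiableAt ℝ g x) (c : ℝ) (j : Fin 3) :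
    pd (fun z => c * g z) j x = c * pd g j x := by
  simp [pd, fderiv_const_mul hg c]

lemma pd_mul_const {g : E3 → ℝ} {x : E3} (hg : DifferentiableAt ℝ g x) (c : ℝ) (j : Fin 3) :
    pd (fun z => g z * c) j x = pd g j x * c := by
  have : (fun z => g z * c) = fun z => c * g z := by funext z; ring
  rw [this, pd_const_mul hg c j]; ring

lemma pd_sum {ι : Type*} (s : Finset ι) {f : ι → E3 → ℝ} {x : E3}
    (hf : ∀ i ∈ s, DifferentiableAt ℝ (f i) x) (j : Fin 3) :
    pd (fun z => ∑ i ∈ s, f i z) j x = ∑ i ∈ s, pd (f i) j x := by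
  simp [pd, fderiv_fun_sum hf]

lemma pd_eventually_zero {f : E3 → ℝ} {x : E3} (h : ∀ᶠ y in nhds x, f y = 0) (j : Fin 3) :
    pd f j x = 0 := by
  have : f =ᶠ[nhds x] (fun _ => (0 : ℝ)) := h
  unfold pd
  rw [this.fderiv_eq]
  simp

lemma contDiffAt_comp {u : E3 → E3} {x : E3} (h : ContDiffAt ℝ 2 u x) (i : Fin 3) :
    ContDiffAt ℝ 2 (fun z => u z i) x :=
  (EuclideanSpace.proj (𝕜 := ℝ) i).contDiff.comp_contDiffAt x h

lemma contDiffAt_pd {f : E3 → ℝ} {x : E3} (hf : ContDiffAt ℝ 2 f x) (j : Fin 3) :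
    ContDiffAt ℝ 1 (fun z => pd f j z) x := by
  have h1 : ContDiffAt ℝ 1 (fderiv ℝ f) x := hf.fderiv_right (by norm_num)
  exact (ContinuousLinearMap.apply ℝ ℝ (EuclideanSpace.single j 1)).contDiff.comp_contDiffAt x h1

lemma pd_comm {f : E3 → ℝ} {x : E3} (hf : ContDiffAt ℝ 2 f x) (i j : Fin 3) :
    pd (fun z => pd f i z) j x = pd (fun z => pd f j z) i x := by
  have hL : DifferentiableAt ℝ (fderiv ℝ f) x :=
    (hf.fderiv_right (m := 1) (by norm_num)).differentiableAt (by norm_num)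
  have key : ∀ v w : E3,
      fderiv ℝ (fun z => fderiv ℝ f z v) x w = fderiv ℝ (fderiv ℝ f) x w v := by
    intro v w
    have h2 := ((ContinuousLinearMap.apply ℝ ℝ v).hasFDerivAt.comp x hL.hasFDerivAt).fderiv
    calc fderiv ℝ (fun z => fderiv ℝ f z v) x w
        = fderiv ℝ ((ContinuousLinearMap.apply ℝ ℝ v) ∘ (fderiv ℝ f)) x w := rfl
      _ = ((ContinuousLinearMap.apply ℝ ℝ v).comp (fderiv ℝ (fderiv ℝ f) x)) w := by rw [h2]
      _ = fderiv ℝ (fderiv ℝ f) x w v := rfl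
  have hs := hf.isSymmSndFDerivAt (by norm_num)
  show fderiv ℝ (fun z => fderiv ℝ f z _) x _ = fderiv ℝ (fun z => fderiv ℝ f z _) x _
  rw [key, key, hs]

end LorentzAux

open LorentzAux

/-- Lorentz reciprocity. -/
theorem lorentz_reciprocity
    (Ω : Set (EuclideanSpace ℝ (Fin 3))) (hΩ : IsOpen Ω) (η : ℝ) (hη : 0 < η)
    (u u' : EuclideanSpace ℝ (Fin 3) → EuclideanSpace ℝ (Fin 3))
    (p p' : EuclideanSpace ℝ (Fin 3) → ℝ)
    (hu : ContDiffOn ℝ 2 u Ω) (hu' : ContDiffOn ℝ 2 u' Ω)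
    (hp : ContDiffOn ℝ 1 p Ω) (hp' : ContDiffOn ℝ 1 p' Ω)
    (hstokes : ∀ x ∈ Ω, ∀ i : Fin 3,
      -η * (∑ j : Fin 3, pd (fun z => pd (fun w => u w i) j z) j x) + pd p i x = 0)
    (hdiv : ∀ x ∈ Ω, ∑ i : Fin 3, pd (fun z => u z i) i x = 0)
    (hstokes' : ∀ x ∈ Ω, ∀ i : Fin 3,
      -η * (∑ j : Fin 3, pd (fun z => pd (fun w => u' w i) j z) j x) + pd p' i x = 0)
    (hdiv' : ∀ x ∈ Ω, ∑ i : Fin 3, pd (fun z => u' z i) i x = 0)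
    (σ σ' : EuclideanSpace ℝ (Fin 3) → Fin 3 → Fin 3 → ℝ)
    (hσ : ∀ x, ∀ i j : Fin 3, σ x i j =
      -(p x) * (if i = j then (1 : ℝ) else 0)
        + η * (pd (fun w => u w i) j x + pd (fun w => u w j) i x))
    (hσ' : ∀ x, ∀ i j : Fin 3, σ' x i j =
      -(p' x) * (if i = j then (1 : ℝ) else 0)
        + η * (pd (fun w => u' w i) j x + pd (fun w => u' w j) i x)) :
    ∀ x ∈ Ω, ∑ i : Fin 3, ∑ j : Fin 3,
      pd (fun z => u' z i * σ z i j - u z i * σ' z i j) j x = 0 := by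
  intro x hx
  have hxn : Ω ∈ nhds x := hΩ.mem_nhds hx
  -- component smoothness at x
  have hui : ∀ i : Fin 3, ContDiffAt ℝ 2 (fun z => u z i) x :=
    fun i => contDiffAt_comp (hu.contDiffAt hxn) i
  have hui' : ∀ i : Fin 3, ContDiffAt ℝ 2 (fun z => u' z i) x :=
    fun i => contDiffAt_comp (hu'.contDiffAt hxn) i
  have dp : DifferentiableAt ℝ p x := (hp.contDiffAt hxn).differentiableAt (by norm_num)
  have dp' : DifferentiableAt ℝ p' x := (hp'.contDiffAt hxn).differentiableAt (by norm_num)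
  have du : ∀ i : Fin 3, DifferentiableAt ℝ (fun z => u z i) x :=
    fun i => (hui i).differentiableAt (by norm_num)
  have du' : ∀ i : Fin 3, DifferentiableAt ℝ (fun z => u' z i) x :=
    fun i => (hui' i).differentiableAt (by norm_num)
  have dpu : ∀ i j : Fin 3, DifferentiableAt ℝ (fun z => pd (fun w => u w i) j z) x :=
    fun i j => (contDiffAt_pd (hui i) j).differentiableAt (by norm_num)
  have dpu' : ∀ i j : Fin 3, DifferentiableAt ℝ (fun z => pd (fun w => u' w i) j z) x :=
    fun i j => (contDiffAt_pd (hui' i) j).differentiableAt (by norm_num)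
  -- stress tensor fields: function form and differentiability
  have hσf : ∀ i j : Fin 3, (fun z => σ z i j) =
      (fun z => -(p z) * (if i = j then (1 : ℝ) else 0)
        + η * (pd (fun w => u w i) j z + pd (fun w => u w j) i z)) :=
    fun i j => funext fun z => hσ z i j
  have hσf' : ∀ i j : Fin 3, (fun z => σ' z i j) =
      (fun z => -(p' z) * (if i = j then (1 : ℝ) else 0)
        + η * (pd (fun w => u' w i) j z + pd (fun w => u' w j) i z)) :=
    fun i j => funext fun z => hσ' z i j
  have dσ : ∀ i j : Fin 3, DifferentiableAt ℝ (fun z => σ z i j) x := by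
    intro i j; rw [hσf i j]
    exact (((dp.neg).mul_const _)).add (((dpu i j).add (dpu j i)).const_mul η)
  have dσ' : ∀ i j : Fin 3, DifferentiableAt ℝ (fun z => σ' z i j) x := by
    intro i j; rw [hσf' i j]
    exact (((dp'.neg).mul_const _)).add (((dpu' i j).add (dpu' j i)).const_mul η)
  -- divergence of stress vanishes
  have pd_neg_p : ∀ (q : EuclideanSpace ℝ (Fin 3) → ℝ), DifferentiableAt ℝ q x →
      ∀ (c : ℝ) (j : Fin 3), pd (fun z => -(q z) * c) j x = -c * pd q j x := by
    intro q hq c j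
    have h1 : (fun z => -(q z) * c) = fun z => (-c) * q z := by funext z; ring
    rw [h1, pd_const_mul hq]
  have keydiv : ∀ (v : EuclideanSpace ℝ (Fin 3) → EuclideanSpace ℝ (Fin 3))
      (hv : ∀ i : Fin 3, ContDiffAt ℝ 2 (fun z => v z i) x)
      (hdv : ∀ y ∈ Ω, ∑ i : Fin 3, pd (fun z => v z i) i y = 0) (i : Fin 3),
      (∑ j : Fin 3, pd (fun z => pd (fun w => v w j) i z) j x) = 0 := by
    intro v hv hdv i
    have e1 : ∀ j : Fin 3, pd (fun z => pd (fun w => v w j) i z) j x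
        = pd (fun z => pd (fun w => v w j) j z) i x := fun j => pd_comm (hv j) i j
    rw [Finset.sum_congr rfl fun j _ => e1 j]
    have e2 : (∑ j : Fin 3, pd (fun z => pd (fun w => v w j) j z) i x)
        = pd (fun z => ∑ j : Fin 3, pd (fun w => v w j) j z) i x := by
      rw [pd_sum Finset.univ (fun j _ =>
        (contDiffAt_pd (hv j) j).differentiableAt (by norm_num)) i]
    rw [e2]
    exact pd_eventually_zero (Filter.eventually_of_mem hxn fun y hy => hdv y hy) i
  have key1 : ∀ i : Fin 3, (∑ j : Fin 3, pd (fun z => σ z i j) j x) = 0 := by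
    intro i
    have e1 : ∀ j : Fin 3, pd (fun z => σ z i j) j x =
        -(if i = j then (1 : ℝ) else 0) * pd p j x
        + η * (pd (fun z => pd (fun w => u w i) j z) j x
          + pd (fun z => pd (fun w => u w j) i z) j x) := by
      intro j
      rw [hσf i j, pd_add ((dp.fun_neg).mul_const _) (((dpu i j).fun_add (dpu j i)).const_mul η),
        pd_neg_p p dp _ j, pd_const_mul ((dpu i j).fun_add (dpu j i)) η j,
        pd_add (dpu i j) (dpu j i) j]
    rw [Finset.sum_congr rfl fun j _ => e1 j, Finset.sum_add_distrib, ← Finset.mul_sum,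
      Finset.sum_add_distrib]
    have e2 : (∑ j : Fin 3, -(if i = j then (1 : ℝ) else 0) * pd p j x) = -pd p i x := by
      simp
    rw [e2, keydiv u hui hdiv i]
    have := hstokes x hx i
    linarith
  have key1' : ∀ i : Fin 3, (∑ j : Fin 3, pd (fun z => σ' z i j) j x) = 0 := by
    intro i
    have e1 : ∀ j : Fin 3, pd (fun z => σ' z i j) j x =
        -(if i = j then (1 : ℝ) else 0) * pd p' j x
        + η * (pd (fun z => pd (fun w => u' w i) j z) j x
          + pd (fun z => pd (fun w => u' w j) i z) j x) := by
      intro j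
      rw [hσf' i j, pd_add ((dp'.fun_neg).mul_const _) (((dpu' i j).fun_add (dpu' j i)).const_mul η),
        pd_neg_p p' dp' _ j, pd_const_mul ((dpu' i j).fun_add (dpu' j i)) η j,
        pd_add (dpu' i j) (dpu' j i) j]
    rw [Finset.sum_congr rfl fun j _ => e1 j, Finset.sum_add_distrib, ← Finset.mul_sum,
      Finset.sum_add_distrib]
    have e2 : (∑ j : Fin 3, -(if i = j then (1 : ℝ) else 0) * pd p' j x) = -pd p' i x := by
      simp
    rw [e2, keydiv u' hui' hdiv' i]
    have := hstokes' x hx i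
    linarith
  -- expand the product rule in the main sum
  have emain : ∀ i j : Fin 3, pd (fun z => u' z i * σ z i j - u z i * σ' z i j) j x
      = (pd (fun z => u' z i) j x * σ x i j + u' x i * pd (fun z => σ z i j) j x)
      - (pd (fun z => u z i) j x * σ' x i j + u x i * pd (fun z => σ' z i j) j x) := by
    intro i j
    rw [pd_sub ((du' i).fun_mul (dσ i j)) ((du i).fun_mul (dσ' i j)) j,
      pd_mul (du' i) (dσ i j) j, pd_mul (du i) (dσ' i j) j]
  simp only [emain]
  have split : ∀ i : Fin 3,
      (∑ j : Fin 3, ((pd (fun z => u' z i) j x * σ x i j + u' x i * pd (fun z => σ z i j) j x)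
        - (pd (fun z => u z i) j x * σ' x i j + u x i * pd (fun z => σ' z i j) j x)))
      = ∑ j : Fin 3, (pd (fun z => u' z i) j x * σ x i j
          - pd (fun z => u z i) j x * σ' x i j) := by
    intro i
    have : ∀ j : Fin 3, (pd (fun z => u' z i) j x * σ x i j + u' x i * pd (fun z => σ z i j) j x)
        - (pd (fun z => u z i) j x * σ' x i j + u x i * pd (fun z => σ' z i j) j x)
        = (pd (fun z => u' z i) j x * σ x i j - pd (fun z => u z i) j x * σ' x i j)
          + (u' x i * pd (fun z => σ z i j) j x - u x i * pd (fun z => σ' z i j) j x) := by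
      intro j; ring
    rw [Finset.sum_congr rfl fun j _ => this j, Finset.sum_add_distrib]
    have h2 : (∑ j : Fin 3, (u' x i * pd (fun z => σ z i j) j x
        - u x i * pd (fun z => σ' z i j) j x)) = 0 := by
      rw [Finset.sum_sub_distrib, ← Finset.mul_sum, ← Finset.mul_sum, key1 i, key1' i]
      ring
    rw [h2]; ring
  rw [Finset.sum_congr rfl fun i _ => split i]
  -- remaining first-order identity
  have hd := hdiv x hx
  have hd' := hdiv' x hx
  simp only [hσ, hσ', Fin.sum_univ_three] at hd hd' ⊢
  norm_num [Fin.ext_iff]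
  linear_combination (-(p x)) * hd' + (p' x) * hd
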